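/- arXiv:1404.3819 — 4 statements merged into one kernel-verified Lean document; each statement's English description precedes it below -/
import Mathlib

section
/- Suppose differentiable functions r(a), R(a) and a constant n satisfy the Riccati equation R′ = 4r + R² − 2aR and the equation r′ = 2r²/R − (n + r)R with R(a) ≠ 0 on an interval. Then R satisfies the second order ODE R″ = (R′)²/(2R) + 2(a² − 1 − 2n) R − 4a R² + (3/2) R³. -/
/-- From the Riccati equations for r and R, R satisfies a second order ODE. -/
theorem stmt_7 (n : ℝ) (I : Set ℝ) (hI : IsOpen I) (r R R' R'' : ℝ → ℝ)
    (hRne : ∀ a ∈ I, R a ≠ 0)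
    (hdR : ∀ a ∈ I, HasDerivAt R (R' a) a)
    (hdR' : ∀ a ∈ I, HasDerivAt R' (R'' a) a)
    (hdr : ∀ a ∈ I, HasDerivAt r (2 * (r a) ^ 2 / R a - (n + r a) * R a) a)
    (hRic : ∀ a ∈ I, R' a = 4 * r a + (R a) ^ 2 - 2 * a * R a) :
    ∀ a ∈ I, R'' a = (R' a) ^ 2 / (2 * R a) + 2 * (a ^ 2 - 1 - 2 * n) * R a
      - 4 * a * (R a) ^ 2 + (3 / 2) * (R a) ^ 3 := by
  intro a ha
  have hR0 := hRne a ha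
  -- the RHS function has this derivative at a
  have hcomb : HasDerivAt (fun x => 4 * r x + (R x) ^ 2 - 2 * x * R x)
      (4 * (2 * (r a) ^ 2 / R a - (n + r a) * R a) + 2 * R a * R' a
        - (2 * R a + 2 * a * R' a)) a := by
    have h1 := (hdr a ha).const_mul 4
    have h2 := (hdR a ha).pow 2
    have h3 := ((hasDerivAt_id a).const_mul 2).mul (hdR a ha)
    have := (h1.add h2).sub h3
    convert this using 1
    · rfl
    · rfl
    · funext x
      simp
    · simp only [id, Nat.cast_ofNat, Nat.add_one_sub_one, pow_one]
      ring
  -- R' agrees with the combination on a neighborhood of a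
  have heq : R' =ᶠ[nhds a] (fun x => 4 * r x + (R x) ^ 2 - 2 * x * R x) := by
    filter_upwards [hI.mem_nhds ha] with x hx
    exact hRic x hx
  have hderiv : HasDerivAt R' (4 * (2 * (r a) ^ 2 / R a - (n + r a) * R a)
      + 2 * R a * R' a - (2 * R a + 2 * a * R' a)) a :=
    hcomb.congr_of_eventuallyEq heq
  have hRR : R'' a = 4 * (2 * (r a) ^ 2 / R a - (n + r a) * R a)
      + 2 * R a * R' a - (2 * R a + 2 * a * R' a) :=
    (hdR' a ha).unique hderiv
  have hr : r a = (R' a - (R a) ^ 2 + 2 * a * R a) / 4 := by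
    have := hRic a ha; linarith
  rw [hRR, hr]
  field_simp
  ring
end

section
/- If σ is twice differentiable and there exist r, R with R nowhere zero such that σ′ = 2r, −(n+r)R + 2r²/R = r′, and (n+r)R + 2r²/R = 2ar − σ, then σ satisfies the Jimbo–Miwa–Okamoto σ-form of Painlevé IV: (σ″)² = 4(a σ′ − σ)² − 4(σ′)²(σ′ + 2n). -/
/-- The Jimbo–Miwa–Okamoto σ-form of Painlevé IV. -/
theorem stmt_13 (n : ℝ) (I : Set ℝ) (hI : IsOpen I) (σ σ' σ'' r r' R : ℝ → ℝ)
    (hRne : ∀ a ∈ I, R a ≠ 0)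
    (hdσ : ∀ a ∈ I, HasDerivAt σ (σ' a) a)
    (hdσ' : ∀ a ∈ I, HasDerivAt σ' (σ'' a) a)
    (hdr : ∀ a ∈ I, HasDerivAt r (r' a) a)
    (hσr : ∀ a ∈ I, σ' a = 2 * r a)
    (h1 : ∀ a ∈ I, -((n + r a) * R a) + 2 * (r a) ^ 2 / R a = r' a)
    (h2 : ∀ a ∈ I, (n + r a) * R a + 2 * (r a) ^ 2 / R a = 2 * a * r a - σ a) :
    ∀ a ∈ I, (σ'' a) ^ 2
      = 4 * (a * σ' a - σ a) ^ 2 - 4 * (σ' a) ^ 2 * (σ' a + 2 * n) := by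
  intro a ha
  have hr2 : HasDerivAt σ' (2 * r' a) a := by
    have := ((hdr a ha).const_mul 2)
    exact this.congr_of_eventuallyEq <|
      Filter.eventuallyEq_of_mem (hI.mem_nhds ha) (fun x hx => hσr x hx)
  have hσ'' : σ'' a = 2 * r' a := (hdσ' a ha).unique hr2
  have hR := hRne a ha
  have e1 := h1 a ha
  have e2 := h2 a ha
  have hσr' := hσr a ha
  have hAB : (n + r a) * R a * (2 * (r a) ^ 2 / R a) = 2 * (r a) ^ 2 * (n + r a) := by
    field_simp
  have hσa : σ a = 2 * a * r a - ((n + r a) * R a + 2 * (r a) ^ 2 / R a) := by linarith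
  rw [hσ'', hσr', ← e1, hσa]
  linear_combination (-16 : ℝ) * hAB
end

section
/- Suppose real sequences r_n, R_n and a real a satisfy r_{n+1} + r_n = a R_n, 2r_n² = (n + r_n)R_n R_{n-1}, and r_n = (1/4)(R_n R_{n-1} ± √(R_n R_{n-1})√(8n + R_n R_{n-1})). Then R_n satisfies the second order difference equation R_{n-1} R_{n+1} (R_n R_{n-1} + 8n)(R_{n+1} R_n + 8n + 8) = [8 R_n a² + R_n R_{n-1} R_{n+1} − 4(a R_n + n + 1) R_{n+1} − 4(a R_n + n) R_{n-1}]². -/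
/-- Second order difference equation for R_n. -/
theorem stmt_15 (a : ℝ) (r R : ℕ → ℝ) (ε : ℕ → ℝ)
    (hRne : ∀ n : ℕ, R n ≠ 0)
    (hrne : ∀ n : ℕ, (n : ℝ) + r n ≠ 0)
    (hrec : ∀ n : ℕ, r (n + 1) + r n = a * R n)
    (hq : ∀ n : ℕ, 1 ≤ n → 2 * (r n) ^ 2 = ((n : ℝ) + r n) * (R n * R (n - 1)))
    (hε : ∀ n : ℕ, ε n = 1 ∨ ε n = -1)
    (hroot : ∀ n : ℕ, 1 ≤ n →
      r n = (1 / 4) * (R n * R (n - 1)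
        + ε n * Real.sqrt (R n * R (n - 1) * (8 * (n : ℝ) + R n * R (n - 1))))) :
    ∀ n : ℕ, 1 ≤ n →
      R (n - 1) * R (n + 1) * (R n * R (n - 1) + 8 * (n : ℝ))
          * (R (n + 1) * R n + 8 * (n : ℝ) + 8)
        = (8 * R n * a ^ 2 + R n * R (n - 1) * R (n + 1)
            - 4 * (a * R n + (n : ℝ) + 1) * R (n + 1)
            - 4 * (a * R n + (n : ℝ)) * R (n - 1)) ^ 2 := by
  intro n hn
  have h1 := hq n hn
  have h2 := hq (n + 1) (by omega)
  have h3 := hrec n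
  rw [Nat.add_sub_cancel] at h2
  push_cast at h2
  have hr1 : r (n + 1) = a * R n - r n := by linarith
  rw [hr1] at h2
  set P := R n * R (n - 1) with hP
  set Q := R (n + 1) * R n with hQ
  set rn := r n
  -- key identities
  have key1 : (4 * rn - P) ^ 2 = P * (P + 8 * (n : ℝ)) := by linear_combination 8 * h1
  have key2 : (4 * (a * R n - rn) - Q) ^ 2 = Q * (Q + 8 * (n : ℝ) + 8) := by
    linear_combination 8 * h2
  have key3 : (4 * rn - P) * (4 * (a * R n - rn) - Q)
      = (8 * R n * a ^ 2 + R n * R (n - 1) * R (n + 1)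
            - 4 * (a * R n + (n : ℝ) + 1) * R (n + 1)
            - 4 * (a * R n + (n : ℝ)) * R (n - 1)) * R n := by
    linear_combination (-4 : ℝ) * h1 + (-4 : ℝ) * h2
  have hRn2 : (R n) ^ 2 ≠ 0 := pow_ne_zero 2 (hRne n)
  apply mul_right_cancel₀ hRn2
  calc R (n - 1) * R (n + 1) * (P + 8 * (n : ℝ)) * (Q + 8 * (n : ℝ) + 8) * R n ^ 2
      = (P * (P + 8 * (n : ℝ))) * (Q * (Q + 8 * (n : ℝ) + 8)) := by rw [hP, hQ]; ring
    _ = ((4 * rn - P) ^ 2) * ((4 * (a * R n - rn) - Q) ^ 2) := by rw [key1, key2]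
    _ = ((4 * rn - P) * (4 * (a * R n - rn) - Q)) ^ 2 := by ring
    _ = _ := by rw [key3]; ring
end

section
/- Suppose p(n,a), r_n(a), R_n(a) are differentiable in a and satisfy: −p(n,a) = n(n−1)/4 − (1/4 + a²/2) r_n + (a/4)(n + r_n)R_n + (a/2) r_n²/R_n; dp/da = a r_n − ((n + r_n)/2) R_n; and dr_n/da = 2r_n²/R_n − (n + r_n)R_n, with R_n nowhere zero. If additionally −2r_n² + (n + r_n)R_n² ≠ 0, then R_n satisfies the Riccati equation R_n′ = 4 r_n + R_n² − 2a R_n. -/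
open Set Filter Topology

/-- Local version of `hasDerivAt_of_hasDerivAt_of_ne`: if `f` has derivative `g y` at every
point `y ≠ x` of an open set `s` containing `x`, `f` is continuous at `x` and `g` is
continuous at `x`, then `f` has derivative `g x` at `x`. -/
theorem aux_hasDerivAt_of_ne {f g : ℝ → ℝ} {s : Set ℝ} (hs : IsOpen s) {x : ℝ} (hx : x ∈ s)
    (f_diff : ∀ y ∈ s, y ≠ x → HasDerivAt f (g y) y) (hf : ContinuousAt f x)
    (hg : ContinuousAt g x) : HasDerivAt f (g x) x := by
  have A : HasDerivWithinAt f (g x) (Ici x) x := by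
    have hmem : s ∩ Ioi x ∈ 𝓝[>] x :=
      inter_mem (mem_nhdsWithin_of_mem_nhds (hs.mem_nhds hx)) self_mem_nhdsWithin
    have diff : DifferentiableOn ℝ f (s ∩ Ioi x) := fun y hy =>
      (f_diff y hy.1 (ne_of_gt hy.2)).differentiableAt.differentiableWithinAt
    apply hasDerivWithinAt_Ici_of_tendsto_deriv diff hf.continuousWithinAt hmem
    refine (hg.tendsto.mono_left nhdsWithin_le_nhds).congr' ?_
    filter_upwards [hmem] with y hy
    exact (f_diff y hy.1 (ne_of_gt hy.2)).deriv.symm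
  have B : HasDerivWithinAt f (g x) (Iic x) x := by
    have hmem : s ∩ Iio x ∈ 𝓝[<] x :=
      inter_mem (mem_nhdsWithin_of_mem_nhds (hs.mem_nhds hx)) self_mem_nhdsWithin
    have diff : DifferentiableOn ℝ f (s ∩ Iio x) := fun y hy =>
      (f_diff y hy.1 (ne_of_lt hy.2)).differentiableAt.differentiableWithinAt
    apply hasDerivWithinAt_Iic_of_tendsto_deriv diff hf.continuousWithinAt hmem
    refine (hg.tendsto.mono_left nhdsWithin_le_nhds).congr' ?_
    filter_upwards [hmem] with y hy
    exact (f_diff y hy.1 (ne_of_lt hy.2)).deriv.symm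
  simpa using B.union A

/-- The Riccati equation R′ = 4r + R² − 2aR follows from the three displayed
equations. -/
theorem stmt_17 (n : ℕ) (I : Set ℝ) (hI : IsOpen I) (p r R p' r' R' : ℝ → ℝ)
    (hRne : ∀ a ∈ I, R a ≠ 0)
    (hne : ∀ a ∈ I, -2 * (r a) ^ 2 + ((n : ℝ) + r a) * (R a) ^ 2 ≠ 0)
    (hdp : ∀ a ∈ I, HasDerivAt p (p' a) a)
    (hdr : ∀ a ∈ I, HasDerivAt r (r' a) a)
    (hdR : ∀ a ∈ I, HasDerivAt R (R' a) a)
    (h1 : ∀ a ∈ I, -(p a) = (n : ℝ) * ((n : ℝ) - 1) / 4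
      - (1 / 4 + a ^ 2 / 2) * r a + (a / 4) * ((n : ℝ) + r a) * R a
      + (a / 2) * (r a) ^ 2 / R a)
    (h2 : ∀ a ∈ I, p' a = a * r a - (((n : ℝ) + r a) / 2) * R a)
    (h3 : ∀ a ∈ I, r' a = 2 * (r a) ^ 2 / R a - ((n : ℝ) + r a) * R a) :
    ∀ a ∈ I, R' a = 4 * r a + (R a) ^ 2 - 2 * a * R a := by
  -- Step 1: the key polynomial identity obtained by differentiating h1.
  have key : ∀ a ∈ I,
      a * (-2 * (r a) ^ 2 + ((n : ℝ) + r a) * (R a) ^ 2)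
        * (R' a - (4 * r a + (R a) ^ 2 - 2 * a * R a)) = 0 := by
    intro a ha
    have hr := hdr a ha
    have hR := hdR a ha
    have hp := hdp a ha
    have hR0 := hRne a ha
    have hA : HasDerivAt (fun x => (1 / 4 + x ^ 2 / 2) * r x)
        ((2 * a ^ 1 / 2) * r a + (1 / 4 + a ^ 2 / 2) * r' a) a := by
      have h := (((hasDerivAt_pow 2 a).div_const 2).const_add (1 / 4 : ℝ)).mul hr
      refine (h.congr_of_eventuallyEq (Filter.Eventually.of_forall fun x => ?_)).congr_deriv ?_
      all_goals try simp only [id_eq, Pi.mul_apply, Pi.pow_apply]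
      all_goals (push_cast; try ring)
    have hB : HasDerivAt (fun x => x / 4 * ((n : ℝ) + r x) * R x)
        ((1 / 4 * ((n : ℝ) + r a) + a / 4 * r' a) * R a
          + a / 4 * ((n : ℝ) + r a) * R' a) a := by
      have h1' : HasDerivAt (fun x => x / 4 * ((n : ℝ) + r x))
          (1 / 4 * ((n : ℝ) + r a) + a / 4 * r' a) a := by
        have h := ((hasDerivAt_id a).div_const 4).mul (hr.const_add (n : ℝ))
        refine (h.congr_of_eventuallyEq (Filter.Eventually.of_forall fun x => ?_)).congr_deriv ?_
        all_goals try simp only [id_eq, Pi.mul_apply, Pi.pow_apply]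
        all_goals (push_cast; try ring)
      exact h1'.mul hR
    have hC : HasDerivAt (fun x => x / 2 * (r x) ^ 2 / R x)
        (((1 / 2 * (r a) ^ 2 + a / 2 * (2 * r a * r' a)) * R a
          - a / 2 * (r a) ^ 2 * R' a) / (R a) ^ 2) a := by
      have hnum : HasDerivAt (fun x => x / 2 * (r x) ^ 2)
          (1 / 2 * (r a) ^ 2 + a / 2 * (2 * r a * r' a)) a := by
        have h := ((hasDerivAt_id a).div_const 2).mul (hr.pow 2)
        refine (h.congr_of_eventuallyEq (Filter.Eventually.of_forall fun x => ?_)).congr_deriv ?_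
        all_goals try simp only [id_eq, Pi.mul_apply, Pi.pow_apply]
        all_goals (push_cast; try ring)
      exact hnum.div hR hR0
    have hG : HasDerivAt (fun x => (n : ℝ) * ((n : ℝ) - 1) / 4
        - (1 / 4 + x ^ 2 / 2) * r x + x / 4 * ((n : ℝ) + r x) * R x
        + x / 2 * (r x) ^ 2 / R x)
        (-(((2 * a ^ 1 / 2) * r a + (1 / 4 + a ^ 2 / 2) * r' a))
          + ((1 / 4 * ((n : ℝ) + r a) + a / 4 * r' a) * R a
            + a / 4 * ((n : ℝ) + r a) * R' a)
          + ((1 / 2 * (r a) ^ 2 + a / 2 * (2 * r a * r' a)) * R a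
            - a / 2 * (r a) ^ 2 * R' a) / (R a) ^ 2) a := by
      have h := (((hasDerivAt_const a ((n : ℝ) * ((n : ℝ) - 1) / 4)).sub hA).add hB).add hC
      refine (h.congr_of_eventuallyEq (Filter.Eventually.of_forall fun x => ?_)).congr_deriv ?_
      · rfl
      ring
    have hF : HasDerivAt (fun x => (n : ℝ) * ((n : ℝ) - 1) / 4
        - (1 / 4 + x ^ 2 / 2) * r x + x / 4 * ((n : ℝ) + r x) * R x
        + x / 2 * (r x) ^ 2 / R x) (-(p' a)) a := by
      have heq : (fun x => -(p x)) =ᶠ[nhds a] (fun x => (n : ℝ) * ((n : ℝ) - 1) / 4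
          - (1 / 4 + x ^ 2 / 2) * r x + x / 4 * ((n : ℝ) + r x) * R x
          + x / 2 * (r x) ^ 2 / R x) := by
        filter_upwards [hI.mem_nhds ha] with x hx
        have := h1 x hx
        linarith [this]
      exact (hp.neg).congr_of_eventuallyEq heq.symm
    have hE := hG.unique hF
    rw [h2 a ha, h3 a ha] at hE
    field_simp at hE
    have hK : (2048 : ℝ) * R a ^ 3 *
        (a * (-2 * (r a) ^ 2 + ((n : ℝ) + r a) * (R a) ^ 2)
          * (R' a - (4 * r a + (R a) ^ 2 - 2 * a * R a))) = 0 := by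
      linear_combination (1024 * R a ^ 3) * hE
    have hc : (2048 : ℝ) * R a ^ 3 ≠ 0 :=
      mul_ne_zero (by norm_num) (pow_ne_zero _ hR0)
    exact (mul_eq_zero.1 hK).resolve_left hc
  -- Step 2: deduce the conclusion; for a ≠ 0 directly, for a = 0 by continuity.
  have main : ∀ a ∈ I, a ≠ 0 → R' a = 4 * r a + (R a) ^ 2 - 2 * a * R a := by
    intro a ha ha0
    have h := key a ha
    have := mul_ne_zero ha0 (hne a ha)
    have h' := (mul_eq_zero.1 h).resolve_left this
    linarith [h']
  intro a ha
  by_cases ha0 : a ≠ 0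
  · exact main a ha ha0
  · push_neg at ha0
    subst ha0
    have hg : ContinuousAt (fun y => 4 * r y + (R y) ^ 2 - 2 * y * R y) 0 := by
      have hrc : ContinuousAt r 0 := (hdr 0 ha).continuousAt
      have hRc : ContinuousAt R 0 := (hdR 0 ha).continuousAt
      fun_prop
    have hRd : HasDerivAt R ((fun y => 4 * r y + (R y) ^ 2 - 2 * y * R y) 0) 0 := by
      apply aux_hasDerivAt_of_ne (g := fun y => 4 * r y + (R y) ^ 2 - 2 * y * R y) hI ha
      · intro y hy hy0
        have := main y hy hy0
        simpa [this] using hdR y hy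
      · exact (hdR 0 ha).continuousAt
      · exact hg
    have := (hdR 0 ha).unique hRd
    simpa using this
end
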